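/- Let G be the join of the complement of the 6-cycle C_6 with the empty graph on 3 vertices (i.e., G = \overline{C_6} ∨ \overline{K_3}), and let e_1, e_2, e_3 be three distinct non-edges of G such that e_1 and e_2 share a common endpoint. Then G + {e_1, e_2, e_3} contains K_8^= as a minor. -/

import Mathlib

open SimpleGraph

/-- The complete 5-partite graph `K_{2,2,2,2,2}`. -/
abbrev K22222 : SimpleGraph (Σ _ : Fin 5, Fin 2) :=
  SimpleGraph.completeMultipartiteGraph fun _ => Fin 2

/-- An `(H₁, H₂, k)`-cockade: any graph isomorphic to `H₁` or `H₂` is one, and identifying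
cliques of size `k` in two cockades yields one (expressed via a decomposition of the glued
graph into the two overlapping pieces). -/
inductive IsCockade {α β : Type} (H₁ : SimpleGraph α) (H₂ : SimpleGraph β) (k : ℕ) :
    {V : Type} → SimpleGraph V → Prop
  | base₁ {V : Type} (G : SimpleGraph V) : Nonempty (G ≃g H₁) → IsCockade H₁ H₂ k G
  | base₂ {V : Type} (G : SimpleGraph V) : Nonempty (G ≃g H₂) → IsCockade H₁ H₂ k G
  | glue {V : Type} (G : SimpleGraph V) (A B : Set V) :
      A ∪ B = Set.univ → ¬ A ⊆ B → ¬ B ⊆ A →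
      (A ∩ B).ncard = k → G.IsClique (A ∩ B) →
      (∀ u ∈ A \ B, ∀ v ∈ B \ A, ¬ G.Adj u v) →
      IsCockade H₁ H₂ k (G.induce A) → IsCockade H₁ H₂ k (G.induce B) →
      IsCockade H₁ H₂ k G

/-- A `(K₈, K_{2,2,2,2,2}, 5)`-cockade. -/
abbrev Cockade85 {V : Type} (G : SimpleGraph V) : Prop :=
  IsCockade (⊤ : SimpleGraph (Fin 8)) K22222 5 G

/-- `H` is a minor of `G`, via branch sets. -/
def IsMinorOf {W V : Type} (H : SimpleGraph W) (G : SimpleGraph V) : Prop :=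
  ∃ B : W → Set V,
    (∀ w, (B w).Nonempty) ∧
    (∀ w, (G.induce (B w)).Connected) ∧
    (Pairwise fun w₁ w₂ => Disjoint (B w₁) (B w₂)) ∧
    (∀ w₁ w₂, H.Adj w₁ w₂ → ∃ u ∈ B w₁, ∃ v ∈ B w₂, G.Adj u v)

/-- `G` contains `K_t` minus two edges as a minor (either of the two nonisomorphic graphs). -/
def HasKEqMinor (t : ℕ) {V : Type} (G : SimpleGraph V) : Prop :=
  ∃ e₁ e₂ : Sym2 (Fin t), e₁ ≠ e₂ ∧ ¬ e₁.IsDiag ∧ ¬ e₂.IsDiag ∧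
    IsMinorOf ((⊤ : SimpleGraph (Fin t)).deleteEdges {e₁, e₂}) G


/-- Add to `G` a new vertex (the `none` vertex) adjacent exactly to the vertices in `N`. -/
def addVertex {V : Type} (G : SimpleGraph V) (N : Set V) : SimpleGraph (Option V) where
  Adj a b :=
    match a, b with
    | some u, some w => G.Adj u w
    | some u, none => u ∈ N
    | none, some w => w ∈ N
    | none, none => False
  symm := by constructor; rintro (_ | u) (_ | w) h <;> first | exact h | exact h.symm
  loopless := by
    constructor
    rintro (_ | u) h
    · exact h
    · exact G.loopless.irrefl u h

/-- The graph obtained from `G` by contracting the edge `xy` (the merged vertex is `x`,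
and `y` is deleted). -/
def contractEdge {V : Type} (G : SimpleGraph V) (x y : V) :
    SimpleGraph {z : V // z ≠ y} where
  Adj a b := a ≠ b ∧
    (G.Adj a b ∨ ((a : V) = x ∧ G.Adj y b) ∨ ((b : V) = x ∧ G.Adj y a))
  symm := by
    constructor
    rintro a b ⟨hne, h⟩
    refine ⟨hne.symm, ?_⟩
    rcases h with h | ⟨h1, h2⟩ | ⟨h1, h2⟩
    · exact Or.inl h.symm
    · exact Or.inr (Or.inr ⟨h1, h2⟩)
    · exact Or.inr (Or.inl ⟨h1, h2⟩)
  loopless := ⟨fun a h => h.1 rfl⟩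

/-- The join of two graphs. -/
def joinGraph {α β : Type} (G : SimpleGraph α) (H : SimpleGraph β) : SimpleGraph (α ⊕ β) where
  Adj a b :=
    match a, b with
    | .inl a, .inl b => G.Adj a b
    | .inr a, .inr b => H.Adj a b
    | .inl _, .inr _ => True
    | .inr _, .inl _ => True
  symm := by constructor; rintro (a | a) (b | b) h <;> first | exact h.symm | trivial
  loopless := by constructor; rintro (a | a) h; exacts [G.loopless.irrefl a h, H.loopless.irrefl a h]

/-- The disjoint union of two graphs. -/
def disjUnionGraph {α β : Type} (G : SimpleGraph α) (H : SimpleGraph β) :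
    SimpleGraph (α ⊕ β) where
  Adj a b :=
    match a, b with
    | .inl a, .inl b => G.Adj a b
    | .inr a, .inr b => H.Adj a b
    | .inl _, .inr _ => False
    | .inr _, .inl _ => False
  symm := by constructor; rintro (a | a) (b | b) h <;> first | exact h.symm | exact h
  loopless := by constructor; rintro (a | a) h; exacts [G.loopless.irrefl a h, H.loopless.irrefl a h]

/-- The cycle graph `C_n` on `ZMod n`. -/
def cycleG (n : ℕ) [NeZero n] : SimpleGraph (ZMod n) :=
  SimpleGraph.fromRel fun i j => i - j = 1

/-- The Petersen graph, as the Kneser graph on 2-element subsets of a 5-element set. -/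
def petersen : SimpleGraph {s : Finset (Fin 5) // s.card = 2} where
  Adj a b := Disjoint a.1 b.1
  symm := ⟨fun _ _ h => h.symm⟩
  loopless := by
    constructor
    intro a h
    have h2 := a.2
    rw [disjoint_self.mp h] at h2
    simp at h2

/-- `G` is `k`-connected: more than `k` vertices, and removing fewer than `k` vertices
leaves a connected graph. -/
def IsKConnected {V : Type} [Fintype V] (k : ℕ) (G : SimpleGraph V) : Prop :=
  k < Fintype.card V ∧ ∀ S : Set V, S.ncard < k → (G.induce Sᶜ).Connected

/-- `G - v` has a `K₄` minor rooted at the 4-element set `T` (with `v ∉ T`): four disjoint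
branch sets avoiding `v`, each inducing a connected subgraph, each meeting `T` in exactly
one vertex, and pairwise joined by an edge. -/
def HasRootedK4MinorAvoiding {V : Type} (G : SimpleGraph V) (T : Set V) (v : V) : Prop :=
  ∃ (t : Fin 4 → V) (B : Fin 4 → Set V),
    Function.Injective t ∧ Set.range t = T ∧
    (∀ i, v ∉ B i) ∧ (∀ i, B i ∩ T = {t i}) ∧
    (∀ i, (G.induce (B i)).Connected) ∧
    (Pairwise fun i j => Disjoint (B i) (B j)) ∧
    (Pairwise fun i j => ∃ a ∈ B i, ∃ b ∈ B j, G.Adj a b)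


/-- The join of the complement of `C₆` with three isolated vertices. -/
abbrev C6barJoinK3bar : SimpleGraph (ZMod 6 ⊕ Fin 3) :=
  joinGraph (cycleG 6)ᶜ (⊥ : SimpleGraph (Fin 3))

section AuxWitness

open Finset

instance joinGraph.adjDecidable {α β : Type} (G : SimpleGraph α) (H : SimpleGraph β)
    [DecidableRel G.Adj] [DecidableRel H.Adj] : DecidableRel (joinGraph G H).Adj
  | Sum.inl a, Sum.inl b => inferInstanceAs (Decidable (G.Adj a b))
  | Sum.inl _, Sum.inr _ => inferInstanceAs (Decidable True)
  | Sum.inr _, Sum.inl _ => inferInstanceAs (Decidable True)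
  | Sum.inr a, Sum.inr b => inferInstanceAs (Decidable (H.Adj a b))

instance cycleG.adjDecidable (n : ℕ) [NeZero n] : DecidableRel (cycleG n).Adj := fun a b =>
  decidable_of_iff' _ (SimpleGraph.fromRel_adj _ a b)

instance fromEdgeSet3.adjDecidable {V : Type} [DecidableEq V] (e₁ e₂ e₃ : Sym2 V) :
    DecidableRel (SimpleGraph.fromEdgeSet {e₁, e₂, e₃}).Adj := fun a b =>
  decidable_of_iff ((s(a, b) = e₁ ∨ s(a, b) = e₂ ∨ s(a, b) = e₃) ∧ a ≠ b)
    (by rw [SimpleGraph.fromEdgeSet_adj]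
        simp only [Set.mem_insert_iff, Set.mem_singleton_iff])

/-- Adjacency in the contraction of the edge `xy` of `G` (merged vertex `x`). -/
abbrev Adj' {V : Type} (G : SimpleGraph V) (x y a b : V) : Prop :=
  G.Adj a b ∨ (a = x ∧ G.Adj y b) ∨ (b = x ∧ G.Adj y a)

/-- The number of ordered bad pairs after contracting `xy`. -/
def badCard {V : Type} [Fintype V] [DecidableEq V] (G : SimpleGraph V) [DecidableRel G.Adj]
    (x y : V) : ℕ :=
  (Finset.univ.filter fun p : V × V =>
    p.1 ≠ y ∧ p.2 ≠ y ∧ p.1 ≠ p.2 ∧ ¬ Adj' G x y p.1 p.2).card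

lemma induce_connected_singleton {V : Type} (G : SimpleGraph V) (v : V) :
    (G.induce {v}).Connected := by
  haveI : Nonempty ({v} : Set V) := ⟨⟨v, rfl⟩⟩
  refine SimpleGraph.Connected.mk fun a b => ?_
  have : a = b := Subtype.ext ((Set.mem_singleton_iff.mp a.2).trans
    (Set.mem_singleton_iff.mp b.2).symm)
  rw [this]

lemma induce_connected_pair {V : Type} (G : SimpleGraph V) {x y : V} (hxy : G.Adj x y) :
    (G.induce {x, y}).Connected := by
  haveI : Nonempty ({x, y} : Set V) := ⟨⟨x, Set.mem_insert _ _⟩⟩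
  refine SimpleGraph.Connected.mk fun a b => ?_
  by_cases h : (a : V) = (b : V)
  · rw [Subtype.ext h]
  · have key : G.Adj (a : V) (b : V) := by
      have ha : (a : V) = x ∨ (a : V) = y := Set.mem_insert_iff.mp a.2
      have hb : (b : V) = x ∨ (b : V) = y := Set.mem_insert_iff.mp b.2
      rcases ha with ha | ha <;> rcases hb with hb | hb
      · exact absurd (ha.trans hb.symm) h
      · rw [ha, hb]; exact hxy
      · rw [ha, hb]; exact hxy.symm
      · exact absurd (ha.trans hb.symm) h
    exact (SimpleGraph.comap_adj.mpr key).reachable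

lemma bridge {V : Type} [Fintype V] [DecidableEq V] (G : SimpleGraph V) [DecidableRel G.Adj]
    (hcard : Fintype.card V = 9) (x y : V) (hxy : G.Adj x y) (hbad : badCard G x y ≤ 4) :
    HasKEqMinor 8 G := by
  have hS : Fintype.card {z : V // z ≠ y} = 8 := by
    have h1 : Fintype.card {z : V // z = y} = 1 := Fintype.card_subtype_eq y
    have h2 := Fintype.card_subtype_compl (fun z : V => z = y)
    rw [h1, hcard] at h2
    exact h2
  obtain ⟨e⟩ : Nonempty (Fin 8 ≃ {z : V // z ≠ y}) := ⟨(Fintype.equivFinOfCardEq hS).symm⟩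
  have hAdjsymm : ∀ a b : V, Adj' G x y a b → Adj' G x y b a := by
    rintro a b (h | ⟨h1, h2⟩ | ⟨h1, h2⟩)
    exacts [Or.inl h.symm, Or.inr (Or.inr ⟨h1, h2⟩), Or.inr (Or.inl ⟨h1, h2⟩)]
  set M : Finset (Fin 8 × Fin 8) := Finset.univ.filter
    (fun p => p.1 ≠ p.2 ∧ ¬ Adj' G x y (e p.1) (e p.2)) with hM
  have hMmem : ∀ p : Fin 8 × Fin 8,
      p ∈ M ↔ p.1 ≠ p.2 ∧ ¬ Adj' G x y (e p.1) (e p.2) := by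
    intro p
    rw [hM, Finset.mem_filter]
    simp only [Finset.mem_univ, true_and]
  have hMcard : M.card ≤ 4 := by
    refine le_trans (Finset.card_le_card_of_injOn
      (fun p => ((e p.1 : V), (e p.2 : V))) ?_ ?_) hbad
    · intro p hp
      obtain ⟨hne, hadj⟩ := (hMmem p).mp hp
      refine Finset.mem_filter.mpr ⟨Finset.mem_univ _, (e p.1).2, (e p.2).2, ?_, hadj⟩
      exact fun h => hne (e.injective (Subtype.ext h))
    · intro p _ q _ h
      obtain ⟨h1, h2⟩ := Prod.ext_iff.mp h
      exact Prod.ext (e.injective (Subtype.ext h1)) (e.injective (Subtype.ext h2))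
  have hswap : ∀ p : Fin 8 × Fin 8, p ∈ M → p.swap ∈ M := by
    intro p hp
    obtain ⟨hne, hadj⟩ := (hMmem p).mp hp
    exact (hMmem p.swap).mpr ⟨hne.symm, fun h => hadj (hAdjsymm _ _ h)⟩
  set A : Finset (Fin 8 × Fin 8) := M.filter (fun p => p.1 < p.2) with hA
  have hM''eq : M.filter (fun p => p.2 < p.1) = A.image Prod.swap := by
    ext p
    simp only [hA, Finset.mem_image, Finset.mem_filter]
    constructor
    · rintro ⟨hp, hlt⟩
      exact ⟨p.swap, ⟨hswap p hp, hlt⟩, Prod.swap_swap p⟩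
    · rintro ⟨q, ⟨hq, hlt⟩, rfl⟩
      exact ⟨hswap q hq, hlt⟩
  have hdisj : Disjoint A (M.filter (fun p => p.2 < p.1)) := by
    refine Finset.disjoint_left.mpr ?_
    intro p h1 h2
    rw [hA, Finset.mem_filter] at h1
    rw [Finset.mem_filter] at h2
    exact absurd h2.2 (lt_asymm h1.2)
  have hunion : A ∪ M.filter (fun p => p.2 < p.1) = M := by
    ext p
    simp only [hA, Finset.mem_union, Finset.mem_filter]
    constructor
    · rintro (⟨h, -⟩ | ⟨h, -⟩) <;> exact h
    · intro hp
      rcases ((hMmem p).mp hp).1.lt_or_gt with h | h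
      · exact Or.inl ⟨hp, h⟩
      · exact Or.inr ⟨hp, h⟩
  have hA2 : A.card ≤ 2 := by
    have hcardu := Finset.card_union_of_disjoint hdisj
    rw [hunion] at hcardu
    have himg : (M.filter (fun p => p.2 < p.1)).card = A.card := by
      rw [hM''eq]
      exact Finset.card_image_of_injective _ Prod.swap_injective
    omega
  set N : Finset (Sym2 (Fin 8)) := A.image (fun p => s(p.1, p.2)) with hN
  have hNcard : N.card ≤ 2 := le_trans Finset.card_image_le hA2
  have hNsub : N ⊆ Finset.univ.filter (fun s : Sym2 (Fin 8) => ¬ s.IsDiag) := by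
    intro s hs
    rw [hN, Finset.mem_image] at hs
    obtain ⟨p, hp, rfl⟩ := hs
    refine Finset.mem_filter.mpr ⟨Finset.mem_univ _, ?_⟩
    rw [Sym2.mk_isDiag_iff]
    rw [hA, Finset.mem_filter] at hp
    exact hp.2.ne
  have hfilter2 : 2 ≤ (Finset.univ.filter (fun s : Sym2 (Fin 8) => ¬ s.IsDiag)).card := by decide
  obtain ⟨u, hNu, hut, hu2⟩ := Finset.exists_subsuperset_card_eq hNsub hNcard hfilter2
  obtain ⟨f₁, f₂, hf12, rfl⟩ := Finset.card_eq_two.mp hu2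
  have hd1 : ¬ f₁.IsDiag :=
    (Finset.mem_filter.mp (hut (Finset.mem_insert_self _ _))).2
  have hd2 : ¬ f₂.IsDiag :=
    (Finset.mem_filter.mp (hut (Finset.mem_insert_of_mem (Finset.mem_singleton_self _)))).2
  set B : Fin 8 → Set V := fun w => if (e w : V) = x then {x, y} else {(e w : V)} with hB
  have hmemB : ∀ w, (e w : V) ∈ B w := by
    intro w
    rw [hB]
    dsimp only
    split_ifs with h
    · rw [h]; exact Set.mem_insert _ _
    · rfl
  refine ⟨f₁, f₂, hf12, hd1, hd2, B, fun w => ⟨_, hmemB w⟩, ?_, ?_, ?_⟩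
  · intro w
    by_cases h : (e w : V) = x
    · rw [hB]; dsimp only; rw [if_pos h]
      exact induce_connected_pair G hxy
    · rw [hB]; dsimp only; rw [if_neg h]
      exact induce_connected_singleton G _
  · intro w₁ w₂ hne12
    have hvne : (e w₁ : V) ≠ (e w₂ : V) := fun h => hne12 (e.injective (Subtype.ext h))
    rw [hB]
    dsimp only
    split_ifs with h1 h2 h2
    · exact absurd (e.injective (Subtype.ext (h1.trans h2.symm))) hne12
    · refine Set.disjoint_singleton_right.mpr ?_
      intro hc
      rcases hc with hc | hc
      · exact h2 hc
      · exact (e w₂).2 hc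
    · refine Set.disjoint_singleton_left.mpr ?_
      intro hc
      rcases hc with hc | hc
      · exact h1 hc
      · exact (e w₁).2 hc
    · exact Set.disjoint_singleton.mpr hvne
  · intro w₁ w₂ hadj
    rw [SimpleGraph.deleteEdges_adj, SimpleGraph.top_adj] at hadj
    obtain ⟨hne12, hnotmem⟩ := hadj
    have hadj' : Adj' G x y (e w₁) (e w₂) := by
      by_contra hc
      have hpM : (w₁, w₂) ∈ M := (hMmem (w₁, w₂)).mpr ⟨hne12, hc⟩
      have hsN : s(w₁, w₂) ∈ N := by
        rcases hne12.lt_or_gt with hlt | hlt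
        · exact Finset.mem_image_of_mem _ (Finset.mem_filter.mpr ⟨hpM, hlt⟩)
        · have : s(w₂, w₁) ∈ N :=
            Finset.mem_image_of_mem _ (Finset.mem_filter.mpr ⟨hswap _ hpM, hlt⟩)
          rwa [Sym2.eq_swap] at this
      rcases Finset.mem_insert.mp (hNu hsN) with h | h
      · exact hnotmem (Or.inl h)
      · exact hnotmem (Or.inr (Finset.mem_singleton.mp h))
    rcases hadj' with h | ⟨h1, h2⟩ | ⟨h1, h2⟩
    · exact ⟨_, hmemB w₁, _, hmemB w₂, h⟩
    · refine ⟨y, ?_, _, hmemB w₂, h2⟩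
      rw [hB]; dsimp only; rw [if_pos h1]
      exact Set.mem_insert_of_mem _ rfl
    · refine ⟨_, hmemB w₁, y, ?_, h2.symm⟩
      rw [hB]; dsimp only; rw [if_pos h1]
      exact Set.mem_insert_of_mem _ rfl

end AuxWitness



/-- The nine non-edges of `C6barJoinK3bar`. -/
def NE : Finset (Sym2 (ZMod 6 ⊕ Fin 3)) :=
  { s(Sum.inl 0, Sum.inl 1), s(Sum.inl 1, Sum.inl 2), s(Sum.inl 2, Sum.inl 3),
    s(Sum.inl 3, Sum.inl 4), s(Sum.inl 4, Sum.inl 5), s(Sum.inl 5, Sum.inl 0),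
    s(Sum.inr 0, Sum.inr 1), s(Sum.inr 0, Sum.inr 2), s(Sum.inr 1, Sum.inr 2) }

lemma mem_NE (e : Sym2 (ZMod 6 ⊕ Fin 3)) (hd : ¬ e.IsDiag)
    (he : e ∉ C6barJoinK3bar.edgeSet) : e ∈ NE := by
  induction e using Sym2.ind with
  | _ u v =>
    rw [SimpleGraph.mem_edgeSet] at he
    revert hd he
    revert u v
    decide

/-- Candidate contraction pairs. -/
def CAND : List ((ZMod 6 ⊕ Fin 3) × (ZMod 6 ⊕ Fin 3)) :=
  [(Sum.inl 0, Sum.inl 3), (Sum.inl 0, Sum.inr 0), (Sum.inl 2, Sum.inr 1),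
   (Sum.inl 4, Sum.inr 2), (Sum.inl 1, Sum.inl 4), (Sum.inl 2, Sum.inl 5),
   (Sum.inl 1, Sum.inr 2), (Sum.inl 3, Sum.inr 0), (Sum.inl 5, Sum.inr 1)]

set_option maxHeartbeats 4000000 in
lemma core : ∀ e₁ ∈ NE, ∀ e₂ ∈ NE, ∀ e₃ ∈ NE,
    e₁ ≠ e₂ → e₁ ≠ e₃ → e₂ ≠ e₃ → (∃ x, x ∈ e₁ ∧ x ∈ e₂) →
    ∃ p ∈ CAND,
      (C6barJoinK3bar ⊔ SimpleGraph.fromEdgeSet {e₁, e₂, e₃}).Adj p.1 p.2 ∧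
      badCard (C6barJoinK3bar ⊔ SimpleGraph.fromEdgeSet {e₁, e₂, e₃}) p.1 p.2 ≤ 4 := by
  decide

theorem C6barK3bar_add_three_edges (e₁ e₂ e₃ : Sym2 (ZMod 6 ⊕ Fin 3))
    (h12 : e₁ ≠ e₂) (h13 : e₁ ≠ e₃) (h23 : e₂ ≠ e₃)
    (hne : ∀ e ∈ ({e₁, e₂, e₃} : Set (Sym2 (ZMod 6 ⊕ Fin 3))),
      ¬ e.IsDiag ∧ e ∉ C6barJoinK3bar.edgeSet)
    (hshare : ∃ x, x ∈ e₁ ∧ x ∈ e₂) :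
    HasKEqMinor 8 (C6barJoinK3bar ⊔ SimpleGraph.fromEdgeSet {e₁, e₂, e₃}) := by
  have h1 := hne e₁ (Set.mem_insert _ _)
  have h2 := hne e₂ (Set.mem_insert_of_mem _ (Set.mem_insert _ _))
  have h3 := hne e₃ (Set.mem_insert_of_mem _ (Set.mem_insert_of_mem _ rfl))
  obtain ⟨p, -, hadj, hbad⟩ := core e₁ (mem_NE e₁ h1.1 h1.2) e₂ (mem_NE e₂ h2.1 h2.2)
    e₃ (mem_NE e₃ h3.1 h3.2) h12 h13 h23 hshare
  exact bridge _ (by decide) p.1 p.2 hadj hbad
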